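/- Let F, P, H be real n×n matrices with H positive semidefinite, and suppose ‖F^t‖ ≤ C ρ^t for all t ≥ 0 with C > 0, 0 < ρ < 1. Let (w_t) and (ŵ_t) be vector sequences with ‖w_t‖ ≤ w̄ and ‖ŵ_t‖ ≤ ŵ for all t. Define η(w;s,t) = Σ_{τ=s}^{t} (Fᵀ)^{τ-s} P w_τ and V(t) = Σ_{s=0}^{t} η(w;s,t)ᵀ H η(ŵ;s,t). Then for every 1 ≤ t ≤ T, V(t)/t ≤ 2‖H‖ (C‖P‖/(1-ρ)^{3/2})² w̄ ŵ. -/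

import Mathlib

lemma adj_pow_eq {n : ℕ} (F : EuclideanSpace ℝ (Fin n) →L[ℝ] EuclideanSpace ℝ (Fin n)) (k : ℕ) :
    (ContinuousLinearMap.adjoint F) ^ k = ContinuousLinearMap.adjoint (F ^ k) := by
  induction k with
  | zero => simp [ContinuousLinearMap.one_def, ContinuousLinearMap.adjoint_id]
  | succ k ih =>
      rw [pow_succ, pow_succ', ih]
      exact (ContinuousLinearMap.adjoint_comp F (F ^ k)).symm

lemma norm_adj_pow {n : ℕ} (F : EuclideanSpace ℝ (Fin n) →L[ℝ] EuclideanSpace ℝ (Fin n)) (k : ℕ) :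
    ‖(ContinuousLinearMap.adjoint F) ^ k‖ = ‖F ^ k‖ := by
  rw [adj_pow_eq]
  exact LinearIsometryEquiv.norm_map ContinuousLinearMap.adjoint (F ^ k)

lemma geo_sum_le {ρ : ℝ} (hρ0 : 0 ≤ ρ) (hρ1 : ρ < 1) (s t : ℕ) :
    ∑ τ ∈ Finset.Icc s t, ρ ^ (τ - s) ≤ (1 - ρ)⁻¹ := by
  rw [← Finset.Ico_add_one_right_eq_Icc, Finset.sum_Ico_eq_sum_range]
  calc ∑ i ∈ Finset.range (t + 1 - s), ρ ^ (s + i - s)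
      = ∑ i ∈ Finset.range (t + 1 - s), ρ ^ i := by
        apply Finset.sum_congr rfl; intro i _; congr 1; omega
    _ ≤ ∑' i : ℕ, ρ ^ i := Summable.sum_le_tsum _ (fun i _ => pow_nonneg hρ0 i)
        (summable_geometric_of_lt_one hρ0 hρ1)
    _ = (1 - ρ)⁻¹ := tsum_geometric_of_lt_one hρ0 hρ1

lemma eta_bound {n : ℕ} (F P : EuclideanSpace ℝ (Fin n) →L[ℝ] EuclideanSpace ℝ (Fin n))
    (C ρ : ℝ) (hC : 0 < C) (hρ0 : 0 < ρ) (hρ1 : ρ < 1)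
    (hF : ∀ t : ℕ, ‖F ^ t‖ ≤ C * ρ ^ t)
    (v : ℕ → EuclideanSpace ℝ (Fin n)) (vbar : ℝ) (hv : ∀ t, ‖v t‖ ≤ vbar) (s t : ℕ) :
    ‖∑ τ ∈ Finset.Icc s t, ((ContinuousLinearMap.adjoint F) ^ (τ - s)) (P (v τ))‖ ≤
      C * ‖P‖ * vbar / (1 - ρ) := by
  have hvbar : 0 ≤ vbar := le_trans (norm_nonneg _) (hv 0)
  calc ‖∑ τ ∈ Finset.Icc s t, ((ContinuousLinearMap.adjoint F) ^ (τ - s)) (P (v τ))‖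
      ≤ ∑ τ ∈ Finset.Icc s t, ‖((ContinuousLinearMap.adjoint F) ^ (τ - s)) (P (v τ))‖ :=
        norm_sum_le _ _
    _ ≤ ∑ τ ∈ Finset.Icc s t, (C * ‖P‖ * vbar) * ρ ^ (τ - s) := by
        apply Finset.sum_le_sum
        intro τ _
        calc ‖((ContinuousLinearMap.adjoint F) ^ (τ - s)) (P (v τ))‖
            ≤ ‖(ContinuousLinearMap.adjoint F) ^ (τ - s)‖ * ‖P (v τ)‖ :=
              ContinuousLinearMap.le_opNorm _ _
          _ ≤ (C * ρ ^ (τ - s)) * (‖P‖ * vbar) := by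
              apply mul_le_mul
              · rw [norm_adj_pow]; exact hF _
              · exact (P.le_opNorm _).trans (mul_le_mul_of_nonneg_left (hv τ) (norm_nonneg P))
              · exact norm_nonneg _
              · exact le_trans (norm_nonneg _) (by rw [norm_adj_pow]; exact hF _)
          _ = (C * ‖P‖ * vbar) * ρ ^ (τ - s) := by ring
    _ = (C * ‖P‖ * vbar) * ∑ τ ∈ Finset.Icc s t, ρ ^ (τ - s) := by
        rw [Finset.mul_sum]
    _ ≤ (C * ‖P‖ * vbar) * (1 - ρ)⁻¹ := by
        apply mul_le_mul_of_nonneg_left (geo_sum_le hρ0.le hρ1 s t)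
        positivity
    _ = C * ‖P‖ * vbar / (1 - ρ) := by rw [div_eq_mul_inv]

theorem stmt6 (n T : ℕ)
    (F P H : EuclideanSpace ℝ (Fin n) →L[ℝ] EuclideanSpace ℝ (Fin n))
    (hsym : ∀ x y, (inner ℝ (H x) y : ℝ) = inner ℝ x (H y))
    (hpsd : ∀ x, 0 ≤ (inner ℝ x (H x) : ℝ))
    (C ρ : ℝ) (hC : 0 < C) (hρ0 : 0 < ρ) (hρ1 : ρ < 1)
    (hF : ∀ t : ℕ, ‖F ^ t‖ ≤ C * ρ ^ t)
    (w what : ℕ → EuclideanSpace ℝ (Fin n)) (wbar whatbar : ℝ)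
    (hw : ∀ t, ‖w t‖ ≤ wbar) (hwhat : ∀ t, ‖what t‖ ≤ whatbar) :
    ∀ t, 1 ≤ t → t ≤ T →
      (∑ s ∈ Finset.range (t + 1),
          (inner ℝ
            (∑ τ ∈ Finset.Icc s t,
              ((ContinuousLinearMap.adjoint F) ^ (τ - s)) (P (w τ)))
            (H (∑ τ ∈ Finset.Icc s t,
              ((ContinuousLinearMap.adjoint F) ^ (τ - s)) (P (what τ)))) : ℝ)) /
          (t : ℝ) ≤
        2 * ‖H‖ * (C * ‖P‖ / (1 - ρ) ^ ((3 : ℝ) / 2)) ^ 2 * wbar * whatbar := by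
  intro t ht1 _
  have hwbar : 0 ≤ wbar := le_trans (norm_nonneg _) (hw 0)
  have hwhatbar : 0 ≤ whatbar := le_trans (norm_nonneg _) (hwhat 0)
  have h1ρ : 0 < 1 - ρ := by linarith
  set B1 : ℝ := C * ‖P‖ * wbar / (1 - ρ) with hB1
  set B2 : ℝ := C * ‖P‖ * whatbar / (1 - ρ) with hB2
  have hB1nn : 0 ≤ B1 := by positivity
  have hB2nn : 0 ≤ B2 := by positivity
  have htpos : (0:ℝ) < t := by exact_mod_cast ht1
  rw [div_le_iff₀ htpos]
  have hterm : ∀ s ∈ Finset.range (t + 1),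
      (inner ℝ
        (∑ τ ∈ Finset.Icc s t, ((ContinuousLinearMap.adjoint F) ^ (τ - s)) (P (w τ)))
        (H (∑ τ ∈ Finset.Icc s t, ((ContinuousLinearMap.adjoint F) ^ (τ - s)) (P (what τ)))) : ℝ)
      ≤ ‖H‖ * (B1 * B2) := by
    intro s _
    set x := ∑ τ ∈ Finset.Icc s t, ((ContinuousLinearMap.adjoint F) ^ (τ - s)) (P (w τ))
    set y := ∑ τ ∈ Finset.Icc s t, ((ContinuousLinearMap.adjoint F) ^ (τ - s)) (P (what τ))
    have hx : ‖x‖ ≤ B1 := eta_bound F P C ρ hC hρ0 hρ1 hF w wbar hw s t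
    have hy : ‖y‖ ≤ B2 := eta_bound F P C ρ hC hρ0 hρ1 hF what whatbar hwhat s t
    calc (inner ℝ x (H y) : ℝ) ≤ ‖x‖ * ‖H y‖ := real_inner_le_norm _ _
      _ ≤ ‖x‖ * (‖H‖ * ‖y‖) := by
          exact mul_le_mul_of_nonneg_left (H.le_opNorm _) (norm_nonneg _)
      _ ≤ B1 * (‖H‖ * B2) := by
          apply mul_le_mul hx _ (by positivity) hB1nn
          exact mul_le_mul_of_nonneg_left hy (norm_nonneg _)
      _ = ‖H‖ * (B1 * B2) := by ring
  have hpow : (1 - ρ) ^ ((3:ℝ)/2) ≤ 1 - ρ := by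
    nth_rewrite 2 [← Real.rpow_one (1 - ρ)]
    exact Real.rpow_le_rpow_of_exponent_ge h1ρ (by linarith) (by norm_num)
  have hpowpos : 0 < (1 - ρ) ^ ((3:ℝ)/2) := Real.rpow_pos_of_pos h1ρ _
  have hfrac : C * ‖P‖ / (1 - ρ) ≤ C * ‖P‖ / (1 - ρ) ^ ((3:ℝ)/2) := by
    gcongr
  calc (∑ s ∈ Finset.range (t + 1),
          (inner ℝ
            (∑ τ ∈ Finset.Icc s t, ((ContinuousLinearMap.adjoint F) ^ (τ - s)) (P (w τ)))
            (H (∑ τ ∈ Finset.Icc s t, ((ContinuousLinearMap.adjoint F) ^ (τ - s)) (P (what τ)))) : ℝ))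
      ≤ ∑ _s ∈ Finset.range (t + 1), ‖H‖ * (B1 * B2) := Finset.sum_le_sum hterm
    _ = (t + 1 : ℝ) * (‖H‖ * (B1 * B2)) := by
        rw [Finset.sum_const, Finset.card_range]; push_cast; ring
    _ ≤ (2 * t : ℝ) * (‖H‖ * (B1 * B2)) := by
        have ht1' : (1:ℝ) ≤ (t:ℝ) := by exact_mod_cast ht1
        apply mul_le_mul_of_nonneg_right _ (by positivity)
        linarith
    _ = 2 * ‖H‖ * (C * ‖P‖ / (1 - ρ)) ^ 2 * wbar * whatbar * t := by
        rw [hB1, hB2]; ring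
    _ ≤ 2 * ‖H‖ * (C * ‖P‖ / (1 - ρ) ^ ((3:ℝ)/2)) ^ 2 * wbar * whatbar * t := by
        gcongr
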